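/- arXiv:1312.6623 — 3 statements merged into one kernel-verified Lean document; each statement's English description precedes it below -/
import Mathlib

section
/- Let α, α', β, β' be complex numbers. Define sequences A, B : ℕ → ℂ by A(m) = ∑_{i+j=m} α^i α'^j and B(m) = ∑_{i+j=m} β^i β'^j (so that ∑ A(m)X^m = ((1-αX)(1-α'X))^{-1} and ∑ B(m)X^m = ((1-βX)(1-β'X))^{-1} as formal power series). Then in the formal power series ring ℂ[[X]] one has (∑_{m≥0} A(m)B(m) X^m) · (1-αβX)(1-αβ'X)(1-α'βX)(1-α'β'X) = 1 - αα'ββ' X². -/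
open PowerSeries Finset

private noncomputable def S (a a' : ℂ) (n : ℕ) : ℂ :=
  ∑ p ∈ Finset.HasAntidiagonal.antidiagonal n, a ^ p.1 * a' ^ p.2

private lemma hS0 (a a' : ℂ) : S a a' 0 = 1 := by simp [S]

private lemma hS1 (a a' : ℂ) (n : ℕ) : S a a' (n+1) = a * S a a' n + a' ^ (n+1) := by
  simp only [S, Finset.Nat.sum_antidiagonal_succ, pow_zero, one_mul, Finset.mul_sum]
  rw [add_comm]
  congr 1
  apply Finset.sum_congr rfl; intro p _; ring

private lemma hSrec (a a' : ℂ) (n : ℕ) :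
    S a a' (n+2) = (a + a') * S a a' (n+1) - a * a' * S a a' n := by
  have h1 := hS1 a a' n
  have h2 := hS1 a a' (n+1)
  have h3 : a' ^ (n+1+1) = a' * (S a a' (n+1) - a * S a a' n) := by
    rw [pow_succ, mul_comm, h1]; ring
  rw [h2, h3]; ring

theorem stmt_0 (α α' β β' : ℂ) :
    (PowerSeries.mk fun m : ℕ =>
        (∑ p ∈ Finset.HasAntidiagonal.antidiagonal m, α ^ p.1 * α' ^ p.2) *
        (∑ p ∈ Finset.HasAntidiagonal.antidiagonal m, β ^ p.1 * β' ^ p.2)) *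
      ((1 - PowerSeries.C (α * β) * PowerSeries.X) *
       (1 - PowerSeries.C (α * β') * PowerSeries.X) *
       (1 - PowerSeries.C (α' * β) * PowerSeries.X) *
       (1 - PowerSeries.C (α' * β') * PowerSeries.X)) =
    1 - PowerSeries.C (α * α' * β * β') * PowerSeries.X ^ 2 := by
  have key : ∀ (f : ℂ⟦X⟧) (a b c d : ℂ),
      f * ((1 - C a * X) * (1 - C b * X) * (1 - C c * X) * (1 - C d * X)) =
      f - C (a+b+c+d) * (f * X^1) + C (a*b+a*c+a*d+b*c+b*d+c*d) * (f * X^2)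
        - C (a*b*c+a*b*d+a*c*d+b*c*d) * (f * X^3) + C (a*b*c*d) * (f * X^4) := by
    intros f a b c d
    simp only [map_add, map_mul]
    ring
  rw [key]
  generalize hE1 : α * β + α * β' + α' * β + α' * β' = E1
  generalize hE2 : α * β * (α * β') + α * β * (α' * β) + α * β * (α' * β') +
      α * β' * (α' * β) + α * β' * (α' * β') + α' * β * (α' * β') = E2
  generalize hE3 : α * β * (α * β') * (α' * β) + α * β * (α * β') * (α' * β') +
      α * β * (α' * β) * (α' * β') + α * β' * (α' * β) * (α' * β') = E3
  generalize hE4 : α * β * (α * β') * (α' * β) * (α' * β') = E4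
  ext n
  simp only [map_sub, map_add, coeff_C_mul, coeff_mul_X_pow', coeff_mk, coeff_one,
    PowerSeries.coeff_X_pow]
  have hSdef : ∀ (a a' : ℂ) (m : ℕ),
      (∑ p ∈ Finset.HasAntidiagonal.antidiagonal m, a ^ p.1 * a' ^ p.2) = S a a' m := fun _ _ _ => rfl
  simp only [hSdef]
  have e1 : ∀ a a' : ℂ, S a a' 1 = a + a' := by
    intro a a'; rw [show (1:ℕ) = 0 + 1 from rfl, hS1, hS0]; ring
  have e2 : ∀ a a' : ℂ, S a a' 2 = a^2 + a*a' + a'^2 := by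
    intro a a'; rw [show (2:ℕ) = 0 + 2 from rfl, hSrec, e1, hS0]; ring
  have e3 : ∀ a a' : ℂ, S a a' 3 = a^3 + a^2*a' + a*a'^2 + a'^3 := by
    intro a a'; rw [show (3:ℕ) = 1 + 2 from rfl, hSrec, e2, e1]; ring
  match n with
  | 0 => norm_num [hS0]
  | 1 => norm_num [hS0, e1, hSdef, ← hE1]; ring
  | 2 => norm_num [hS0, e1, e2, hSdef, ← hE1, ← hE2]; ring
  | 3 => norm_num [hS0, e1, e2, e3, hSdef, ← hE1, ← hE2, ← hE3]; ring
  | (n+4) =>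
    have hA2 := hSrec α α' n
    have hA3 := hSrec α α' (n+1)
    have hA4 := hSrec α α' (n+2)
    have hB2 := hSrec β β' n
    have hB3 := hSrec β β' (n+1)
    have hB4 := hSrec β β' (n+2)
    rw [show n+1+2 = n+3 from rfl] at hA3 hB3
    rw [show n+2+2 = n+4 from rfl] at hA4 hB4
    norm_num [PowerSeries.coeff_C, Nat.add_eq_zero]
    simp only [show n+4-2 = n+2 from rfl, show n+4-3 = n+1 from rfl]
    rw [hA4, hB4, hA3, hB3, hA2, hB2, ← hE1, ← hE2, ← hE3, ← hE4]
    ring_nf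
    simp
end

section
/- Let A, B : ℕ≥1 → ℂ be multiplicative arithmetic functions (A(1)=1, A(mn)=A(m)A(n) for coprime m,n, and likewise for B) such that for every prime p there are complex numbers α_p, α'_p, β_p, β'_p with A(p^m) = ∑_{i+j=m} α_p^i (α'_p)^j and B(p^m) = ∑_{i+j=m} β_p^i (β'_p)^j for all m ≥ 0, and suppose there are real numbers a, b with |α_p|, |α'_p| ≤ p^a and |β_p|, |β'_p| ≤ p^b for all primes p. Then for every complex s with Re(s) > a + b + 2, the Dirichlet series ∑_{n=1}^∞ A(n)B(n) n^{-s} converges absolutely, the product over all primes p of (1 - α_p α'_p β_p β'_p p^{-2s}) · [(1-α_pβ_p p^{-s})(1-α_pβ'_p p^{-s})(1-α'_pβ_p p^{-s})(1-α'_pβ'_p p^{-s})]^{-1} converges, and the two are equal. -/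
open Finset

noncomputable def hseq (α α' : ℂ) (m : ℕ) : ℂ := ∑ ij ∈ Finset.HasAntidiagonal.antidiagonal m, α ^ ij.1 * α' ^ ij.2

lemma hseq_zero (α α' : ℂ) : hseq α α' 0 = 1 := by simp [hseq]

lemma hseq_succ (α α' : ℂ) (m : ℕ) : hseq α α' (m + 1) = α * hseq α α' m + α' ^ (m + 1) := by
  simp only [hseq, Finset.Nat.sum_antidiagonal_succ]
  rw [Finset.mul_sum]
  ring_nf

lemma hseq_one (α α' : ℂ) : hseq α α' 1 = α + α' := by
  rw [show (1:ℕ) = 0 + 1 from rfl, hseq_succ, hseq_zero]; ring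

lemma hseq_rec (α α' : ℂ) (m : ℕ) :
    hseq α α' (m + 2) = (α + α') * hseq α α' (m + 1) - α * α' * hseq α α' m := by
  have h1 : hseq α α' (m + 1) = α * hseq α α' m + α' ^ (m + 1) := hseq_succ α α' m
  have h2 : hseq α α' (m + 2) = α * hseq α α' (m + 1) + α' ^ (m + 2) := hseq_succ α α' (m + 1)
  have : (α' : ℂ) ^ (m + 2) = α' * α' ^ (m + 1) := by ring
  rw [h2, this, show (α':ℂ)^(m+1) = hseq α α' (m+1) - α * hseq α α' m by rw [h1]; ring]
  ring

lemma crec (α α' β β' : ℂ) (m : ℕ) :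
    hseq α α' (m+4) * hseq β β' (m+4)
      + (-(α*β + α*β' + α'*β + α'*β')) * (hseq α α' (m+3) * hseq β β' (m+3))
      + (α*β*(α*β') + α*β*(α'*β) + α*β*(α'*β') + α*β'*(α'*β) + α*β'*(α'*β') + α'*β*(α'*β'))
          * (hseq α α' (m+2) * hseq β β' (m+2))
      + (-(α*β*(α*β')*(α'*β) + α*β*(α*β')*(α'*β') + α*β*(α'*β)*(α'*β') + α*β'*(α'*β)*(α'*β')))
          * (hseq α α' (m+1) * hseq β β' (m+1))
      + (α*β*(α*β')*(α'*β)*(α'*β')) * (hseq α α' m * hseq β β' m) = 0 := by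
  have a2 : hseq α α' (m+2) = (α + α') * hseq α α' (m+1) - α * α' * hseq α α' m := hseq_rec α α' m
  have a3 : hseq α α' (m+3) = (α + α') * hseq α α' (m+2) - α * α' * hseq α α' (m+1) :=
    hseq_rec α α' (m+1)
  have a4 : hseq α α' (m+4) = (α + α') * hseq α α' (m+3) - α * α' * hseq α α' (m+2) :=
    hseq_rec α α' (m+2)
  have b2 : hseq β β' (m+2) = (β + β') * hseq β β' (m+1) - β * β' * hseq β β' m := hseq_rec β β' m
  have b3 : hseq β β' (m+3) = (β + β') * hseq β β' (m+2) - β * β' * hseq β β' (m+1) :=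
    hseq_rec β β' (m+1)
  have b4 : hseq β β' (m+4) = (β + β') * hseq β β' (m+3) - β * β' * hseq β β' (m+2) :=
    hseq_rec β β' (m+2)
  rw [a4, b4, a3, b3, a2, b2]
  ring
open Finset

lemma card_divisors_le (n : ℕ) : n.divisors.card ≤ 2 * (n.sqrt + 1) := by
  classical
  have hsplit : n.divisors.card =
      (n.divisors.filter (· ≤ n.sqrt)).card + (n.divisors.filter (¬ · ≤ n.sqrt)).card :=
    (Finset.card_filter_add_card_filter_not _).symm
  have h1 : (n.divisors.filter (· ≤ n.sqrt)).card ≤ n.sqrt + 1 := by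
    have : (n.divisors.filter (· ≤ n.sqrt)) ⊆ Finset.range (n.sqrt + 1) := by
      intro d hd
      simp only [Finset.mem_filter] at hd
      exact Finset.mem_range.mpr (Nat.lt_succ_of_le hd.2)
    simpa using Finset.card_le_card this
  have h2 : (n.divisors.filter (¬ · ≤ n.sqrt)).card ≤ n.sqrt + 1 := by
    have : (n.divisors.filter (¬ · ≤ n.sqrt)).card ≤ (Finset.range (n.sqrt + 1)).card := by
      apply Finset.card_le_card_of_injOn (fun d => n / d)
      · intro d hd
        simp only [Finset.mem_coe, Finset.mem_filter, Nat.mem_divisors, not_le] at hd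
        obtain ⟨⟨hdvd, hn0⟩, hlt⟩ := hd
        refine Finset.mem_range.mpr (Nat.lt_succ_of_le ?_)
        have hd0 : 0 < d := Nat.pos_of_dvd_of_pos hdvd (Nat.pos_of_ne_zero hn0)
        refine Nat.le_of_lt_succ ?_
        rw [Nat.div_lt_iff_lt_mul hd0]
        calc n < (n.sqrt + 1) * (n.sqrt + 1) := by
              have := Nat.lt_succ_sqrt' n
              simpa [pow_two, Nat.succ_eq_add_one] using this
        _ ≤ (n.sqrt + 1) * d := by
            exact Nat.mul_le_mul_left _ hlt
      · intro d1 h1 d2 h2 heq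
        simp only [Finset.coe_filter, Set.mem_setOf_eq, Nat.mem_divisors] at h1 h2
        have e1 : n / (n / d1) = d1 := Nat.div_div_self h1.1.1 h1.1.2
        have e2 : n / (n / d2) = d2 := Nat.div_div_self h2.1.1 h2.1.2
        simp only at heq
        rw [← e1, ← e2, heq]
    simpa using this
  omega

lemma card_divisors_sq_le (n : ℕ) (hn : 1 ≤ n) : n.divisors.card ^ 2 ≤ 16 * n := by
  have h := card_divisors_le n
  have hs : 1 ≤ n.sqrt := by
    rw [show (1:ℕ) = Nat.sqrt 1 from rfl]; exact Nat.sqrt_le_sqrt hn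
  have h4 : n.divisors.card ≤ 4 * n.sqrt := by omega
  calc n.divisors.card ^ 2 ≤ (4 * n.sqrt)^2 := Nat.pow_le_pow_left h4 2
    _ = 16 * (n.sqrt * n.sqrt) := by ring
    _ ≤ 16 * n := by
        have := Nat.sqrt_le' n
        simp only [pow_two] at this ⊢
        omega
open Finset

lemma prime_pow_bound (α α' : ℂ) (p : ℕ) (k : ℕ) (a : ℝ) (hp : 1 ≤ p)
    (h1 : ‖α‖ ≤ (p:ℝ)^a) (h2 : ‖α'‖ ≤ (p:ℝ)^a) :
    ‖∑ ij ∈ Finset.HasAntidiagonal.antidiagonal k, α ^ ij.1 * α' ^ ij.2‖ ≤ (k+1 : ℝ) * ((p^k : ℕ) : ℝ)^a := by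
  have hpa : (0:ℝ) ≤ (p:ℝ)^a := Real.rpow_nonneg (by positivity) a
  have hcast : ((p^k : ℕ) : ℝ)^a = ((p:ℝ)^a)^k := by
    rw [Nat.cast_pow, ← Real.rpow_natCast ((p:ℝ)^a) k, ← Real.rpow_natCast (p:ℝ) k,
      ← Real.rpow_mul (by positivity), ← Real.rpow_mul (by positivity), mul_comm]
  rw [hcast]
  calc ‖∑ ij ∈ Finset.HasAntidiagonal.antidiagonal k, α ^ ij.1 * α' ^ ij.2‖
      ≤ ∑ ij ∈ Finset.HasAntidiagonal.antidiagonal k, ‖α ^ ij.1 * α' ^ ij.2‖ := norm_sum_le _ _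
    _ ≤ ∑ _ij ∈ Finset.HasAntidiagonal.antidiagonal k, ((p:ℝ)^a)^k := by
        apply Finset.sum_le_sum
        intro ij hij
        have hij' : ij.1 + ij.2 = k := Finset.HasAntidiagonal.mem_antidiagonal.mp hij
        rw [norm_mul, norm_pow, norm_pow]
        calc ‖α‖ ^ ij.1 * ‖α'‖ ^ ij.2
            ≤ ((p:ℝ)^a) ^ ij.1 * ((p:ℝ)^a) ^ ij.2 := by
              apply mul_le_mul (pow_le_pow_left₀ (norm_nonneg _) h1 _)
                (pow_le_pow_left₀ (norm_nonneg _) h2 _) (by positivity) (by positivity)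
          _ = ((p:ℝ)^a)^k := by rw [← pow_add, hij']
    _ = (k+1 : ℝ) * ((p:ℝ)^a)^k := by
        rw [Finset.sum_const, Finset.Nat.card_antidiagonal]
        ring

lemma card_divisors_prime_pow {p : ℕ} (hp : p.Prime) (k : ℕ) :
    (p^k).divisors.card = k + 1 := by
  rw [Nat.divisors_prime_pow hp, Finset.card_map, Finset.card_range]

lemma Abound (A : ℕ → ℂ) (hA1 : A 1 = 1)
    (hAmul : ∀ m n : ℕ, Nat.Coprime m n → A (m * n) = A m * A n)
    (α α' : ℕ → ℂ)
    (hAp : ∀ p : ℕ, p.Prime → ∀ m : ℕ,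
      A (p ^ m) = ∑ ij ∈ Finset.HasAntidiagonal.antidiagonal m, (α p) ^ ij.1 * (α' p) ^ ij.2)
    (a : ℝ) (hα : ∀ p : ℕ, p.Prime → ‖α p‖ ≤ (p : ℝ) ^ a ∧ ‖α' p‖ ≤ (p : ℝ) ^ a) :
    ∀ n : ℕ, 1 ≤ n → ‖A n‖ ≤ (n.divisors.card : ℝ) * (n:ℝ)^a := by
  intro n
  induction n using Nat.recOnPosPrimePosCoprime with
  | prime_pow p k hp hk =>
    intro _
    have hq : p.Prime := hp
    rw [hAp p hq k, card_divisors_prime_pow hq k]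
    have := prime_pow_bound (α p) (α' p) p k a hq.one_lt.le
      (hα p hq).1 (hα p hq).2
    simpa using this
  | zero => intro h; exact absurd h (by norm_num)
  | one => intro _; simp [hA1, Real.one_rpow]
  | coprime m n hm hn hmn ihm ihn =>
    intro _
    rw [hAmul m n hmn, norm_mul]
    have hdm := ihm (by omega)
    have hdn := ihn (by omega)
    have hcard : ((m*n).divisors.card : ℝ) = m.divisors.card * n.divisors.card := by
      rw [Nat.Coprime.card_divisors_mul hmn]; push_cast; ring
    have hpow : ((m*n : ℕ):ℝ)^a = (m:ℝ)^a * (n:ℝ)^a := by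
      push_cast
      exact Real.mul_rpow (by positivity) (by positivity)
    rw [hcard, hpow]
    calc ‖A m‖ * ‖A n‖ ≤ ((m.divisors.card : ℝ) * (m:ℝ)^a) * ((n.divisors.card : ℝ) * (n:ℝ)^a) :=
          mul_le_mul hdm hdn (norm_nonneg _) (by positivity)
      _ = _ := by ring

section
variable (α α' β β' x : ℂ)

noncomputable def cfn (m : ℕ) : ℂ := hseq α α' m * hseq β β' m * x ^ m

noncomputable def Dfn : ℂ := (1 - α*β*x) * (1 - α*β'*x) * (1 - α'*β*x) * (1 - α'*β'*x)

noncomputable def Efn (N : ℕ) : ℂ :=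
    cfn α α' β β' x N * ((α*β*(α*β')*(α'*β)*(α'*β')) * x^4)
  + cfn α α' β β' x (N+1) * ((-(α*β*(α*β')*(α'*β) + α*β*(α*β')*(α'*β') + α*β*(α'*β)*(α'*β') + α*β'*(α'*β)*(α'*β'))) * x^3
        + (α*β*(α*β')*(α'*β)*(α'*β')) * x^4)
  + cfn α α' β β' x (N+2) * ((α*β*(α*β') + α*β*(α'*β) + α*β*(α'*β') + α*β'*(α'*β) + α*β'*(α'*β') + α'*β*(α'*β')) * x^2
        + (-(α*β*(α*β')*(α'*β) + α*β*(α*β')*(α'*β') + α*β*(α'*β)*(α'*β') + α*β'*(α'*β)*(α'*β'))) * x^3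
        + (α*β*(α*β')*(α'*β)*(α'*β')) * x^4)
  + cfn α α' β β' x (N+3) * ((-(α*β + α*β' + α'*β + α'*β')) * x
        + (α*β*(α*β') + α*β*(α'*β) + α*β*(α'*β') + α*β'*(α'*β) + α*β'*(α'*β')+ α'*β*(α'*β')) * x^2
        + (-(α*β*(α*β')*(α'*β) + α*β*(α*β')*(α'*β') + α*β*(α'*β)*(α'*β') + α*β'*(α'*β)*(α'*β'))) * x^3
        + (α*β*(α*β')*(α'*β)*(α'*β')) * x^4)

lemma partial_id (N : ℕ) :
    Dfn α α' β β' x * (∑ m ∈ Finset.range (N + 4), cfn α α' β β' x m)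
      = 1 - α*α'*β*β'*x^2 + Efn α α' β β' x N := by
  induction N with
  | zero =>
    have h0 : hseq α α' 0 = 1 := hseq_zero α α'
    have h1 : hseq α α' 1 = α * hseq α α' 0 + α' ^ 1 := hseq_succ α α' 0
    have h2 : hseq α α' 2 = α * hseq α α' 1 + α' ^ 2 := hseq_succ α α' 1
    have h3 : hseq α α' 3 = α * hseq α α' 2 + α' ^ 3 := hseq_succ α α' 2
    have g0 : hseq β β' 0 = 1 := hseq_zero β β'
    have g1 : hseq β β' 1 = β * hseq β β' 0 + β' ^ 1 := hseq_succ β β' 0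
    have g2 : hseq β β' 2 = β * hseq β β' 1 + β' ^ 2 := hseq_succ β β' 1
    have g3 : hseq β β' 3 = β * hseq β β' 2 + β' ^ 3 := hseq_succ β β' 2
    simp only [Dfn, Efn, cfn, Finset.sum_range_succ, Finset.range_one, Finset.sum_singleton]
    rw [h3, g3, h2, g2, h1, g1, h0, g0]
    ring
  | succ N ih =>
    rw [Finset.sum_range_succ, mul_add, ih]
    have hr := crec α α' β β' N
    simp only [Efn, cfn, Dfn, show N+1+1 = N+2 from rfl, show N+1+2 = N+3 from rfl,
      show N+1+3 = N+4 from rfl, show N+1+4 = N+5 from rfl]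
    linear_combination (x^4 * x^N) * hr

lemma Efn_tendsto (hs : Summable (cfn α α' β β' x)) :
    Filter.Tendsto (Efn α α' β β' x) Filter.atTop (nhds 0) := by
  have h0 : Filter.Tendsto (cfn α α' β β' x) Filter.atTop (nhds 0) := hs.tendsto_atTop_zero
  have hj : ∀ j : ℕ, Filter.Tendsto (fun N => cfn α α' β β' x (N + j)) Filter.atTop (nhds 0) :=
    fun j => h0.comp (Filter.tendsto_add_atTop_nat j)
  have : Efn α α' β β' x = fun N =>
      cfn α α' β β' x (N+0) * ((α*β*(α*β')*(α'*β)*(α'*β')) * x^4)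
    + cfn α α' β β' x (N+1) * ((-(α*β*(α*β')*(α'*β) + α*β*(α*β')*(α'*β') + α*β*(α'*β)*(α'*β') + α*β'*(α'*β)*(α'*β'))) * x^3
        + (α*β*(α*β')*(α'*β)*(α'*β')) * x^4)
    + cfn α α' β β' x (N+2) * ((α*β*(α*β') + α*β*(α'*β) + α*β*(α'*β') + α*β'*(α'*β) + α*β'*(α'*β') + α'*β*(α'*β')) * x^2
        + (-(α*β*(α*β')*(α'*β) + α*β*(α*β')*(α'*β') + α*β*(α'*β)*(α'*β') + α*β'*(α'*β)*(α'*β'))) * x^3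
        + (α*β*(α*β')*(α'*β)*(α'*β')) * x^4)
    + cfn α α' β β' x (N+3) * ((-(α*β + α*β' + α'*β + α'*β')) * x
        + (α*β*(α*β') + α*β*(α'*β) + α*β*(α'*β') + α*β'*(α'*β) + α*β'*(α'*β')+ α'*β*(α'*β')) * x^2
        + (-(α*β*(α*β')*(α'*β) + α*β*(α*β')*(α'*β') + α*β*(α'*β)*(α'*β') + α*β'*(α'*β)*(α'*β'))) * x^3
        + (α*β*(α*β')*(α'*β)*(α'*β')) * x^4) := by
    funext N; simp only [Efn, Nat.add_zero]
  rw [this]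
  have z : (0:ℂ) = 0 * ((α*β*(α*β')*(α'*β)*(α'*β')) * x^4) + 0 + 0 + 0 := by ring
  simpa using (((((hj 0).mul_const _).add ((hj 1).mul_const _)).add
    ((hj 2).mul_const _)).add ((hj 3).mul_const _))

lemma local_id (hs : Summable (cfn α α' β β' x)) :
    Dfn α α' β β' x * (∑' m, cfn α α' β β' x m) = 1 - α*α'*β*β'*x^2 := by
  have hps : Filter.Tendsto (fun N => ∑ m ∈ Finset.range N, cfn α α' β β' x m)
      Filter.atTop (nhds (∑' m, cfn α α' β β' x m)) := hs.hasSum.tendsto_sum_nat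
  have h1 : Filter.Tendsto (fun N => Dfn α α' β β' x * ∑ m ∈ Finset.range (N+4), cfn α α' β β' x m)
      Filter.atTop (nhds (Dfn α α' β β' x * ∑' m, cfn α α' β β' x m)) :=
    (hps.comp (Filter.tendsto_add_atTop_nat 4)).const_mul _
  have h2 : Filter.Tendsto (fun N => Dfn α α' β β' x * ∑ m ∈ Finset.range (N+4), cfn α α' β β' x m)
      Filter.atTop (nhds (1 - α*α'*β*β'*x^2 + 0)) := by
    simp only [partial_id]
    exact (Efn_tendsto α α' β β' x hs).const_add _
  rw [add_zero] at h2
  exact tendsto_nhds_unique h1 h2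

end
theorem stmt_1 (A B : ℕ → ℂ)
    (hA1 : A 1 = 1) (hB1 : B 1 = 1)
    (hAmul : ∀ m n : ℕ, Nat.Coprime m n → A (m * n) = A m * A n)
    (hBmul : ∀ m n : ℕ, Nat.Coprime m n → B (m * n) = B m * B n)
    (α α' β β' : ℕ → ℂ)
    (hAp : ∀ p : ℕ, p.Prime → ∀ m : ℕ,
      A (p ^ m) = ∑ ij ∈ Finset.HasAntidiagonal.antidiagonal m, (α p) ^ ij.1 * (α' p) ^ ij.2)
    (hBp : ∀ p : ℕ, p.Prime → ∀ m : ℕ,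
      B (p ^ m) = ∑ ij ∈ Finset.HasAntidiagonal.antidiagonal m, (β p) ^ ij.1 * (β' p) ^ ij.2)
    (a b : ℝ)
    (hα : ∀ p : ℕ, p.Prime → ‖α p‖ ≤ (p : ℝ) ^ a ∧ ‖α' p‖ ≤ (p : ℝ) ^ a)
    (hβ : ∀ p : ℕ, p.Prime → ‖β p‖ ≤ (p : ℝ) ^ b ∧ ‖β' p‖ ≤ (p : ℝ) ^ b) :
    ∀ s : ℂ, a + b + 2 < s.re →
      Summable (fun n : ℕ => ‖A (n + 1) * B (n + 1) * ((n + 1 : ℕ) : ℂ) ^ (-s)‖) ∧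
      Multipliable (fun p : Nat.Primes =>
        (1 - α p.1 * α' p.1 * β p.1 * β' p.1 * (p.1 : ℂ) ^ (-(2 * s))) *
          ((1 - α p.1 * β p.1 * (p.1 : ℂ) ^ (-s)) * (1 - α p.1 * β' p.1 * (p.1 : ℂ) ^ (-s)) *
           (1 - α' p.1 * β p.1 * (p.1 : ℂ) ^ (-s)) * (1 - α' p.1 * β' p.1 * (p.1 : ℂ) ^ (-s)))⁻¹) ∧
      (∑' n : ℕ, A (n + 1) * B (n + 1) * ((n + 1 : ℕ) : ℂ) ^ (-s)) =
        ∏' p : Nat.Primes,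
          (1 - α p.1 * α' p.1 * β p.1 * β' p.1 * (p.1 : ℂ) ^ (-(2 * s))) *
            ((1 - α p.1 * β p.1 * (p.1 : ℂ) ^ (-s)) * (1 - α p.1 * β' p.1 * (p.1 : ℂ) ^ (-s)) *
             (1 - α' p.1 * β p.1 * (p.1 : ℂ) ^ (-s)) * (1 - α' p.1 * β' p.1 * (p.1 : ℂ) ^ (-s)))⁻¹ := by
  intro s hσ
  set f : ℕ → ℂ := fun n => if n = 0 then 0 else A n * B n * (n : ℂ) ^ (-s) with hfdef
  have hf0 : f 0 = 0 := by simp [hfdef]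
  have hf1 : f 1 = 1 := by simp [hfdef, hA1, hB1, Complex.one_cpow]
  have hfmul : ∀ {m n : ℕ}, Nat.Coprime m n → f (m * n) = f m * f n := by
    intro m n hmn
    rcases eq_or_ne m 0 with rfl | hm
    · have hn1 : n = 1 := by simpa using hmn
      subst hn1; simp [hf0, hf1]
    rcases eq_or_ne n 0 with rfl | hn
    · have hm1 : m = 1 := by simpa using hmn
      subst hm1; simp [hf0, hf1]
    have hmn0 : m * n ≠ 0 := Nat.mul_ne_zero hm hn
    simp only [hfdef, if_neg hm, if_neg hn, if_neg hmn0]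
    rw [hAmul m n hmn, hBmul m n hmn, Nat.cast_mul,
      show ((m : ℂ) * (n : ℂ)) ^ (-s) = (m : ℂ) ^ (-s) * (n : ℂ) ^ (-s) from
        Complex.natCast_mul_natCast_cpow m n (-s)]
    ring
  have hAb := Abound A hA1 hAmul α α' hAp a hα
  have hBb := Abound B hB1 hBmul β β' hBp b hβ
  have hexp : a + b + 1 - s.re < -1 := by linarith
  have hnorm : Summable (fun n => ‖f n‖) := by
    have hgsum : Summable (fun n : ℕ => (16 : ℝ) * (n : ℝ) ^ (a + b + 1 - s.re)) :=
    (Real.summable_nat_rpow.mpr hexp).mul_left 16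
    refine Summable.of_nonneg_of_le (fun n => norm_nonneg (f n)) ?_ hgsum
    intro n
    rcases eq_or_ne n 0 with rfl | hn
    · simp [hf0, Real.zero_rpow (by linarith : a + b + 1 - s.re ≠ 0)]
    have hn1 : 1 ≤ n := Nat.one_le_iff_ne_zero.mpr hn
    have hnpos : (0:ℝ) < (n:ℝ) := by exact_mod_cast Nat.pos_of_ne_zero hn
    have hnc : ‖((n:ℕ) : ℂ) ^ (-s)‖ = (n:ℝ) ^ (-s.re) := by
      rw [Complex.norm_natCast_cpow_of_pos (Nat.pos_of_ne_zero hn), Complex.neg_re]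
    have hd2 : ((n.divisors.card : ℝ))^2 ≤ 16 * (n:ℝ) := by
      exact_mod_cast card_divisors_sq_le n hn1
    have h1 := hAb n hn1
    have h2 := hBb n hn1
    have hstep : ‖f n‖ ≤ ((n.divisors.card : ℝ))^2 * ((n:ℝ)^a * (n:ℝ)^b * (n:ℝ)^(-s.re)) := by
      simp only [hfdef, if_neg hn]
      rw [norm_mul, norm_mul, hnc]
      calc ‖A n‖ * ‖B n‖ * (n:ℝ)^(-s.re)
          ≤ ((n.divisors.card : ℝ) * (n:ℝ)^a) * ((n.divisors.card : ℝ) * (n:ℝ)^b)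
              * (n:ℝ)^(-s.re) := by
            have := mul_le_mul h1 h2 (norm_nonneg _) (by positivity)
            exact mul_le_mul_of_nonneg_right this (by positivity)
        _ = _ := by ring
    refine hstep.trans ?_
    have hr1 : (n:ℝ)^a * (n:ℝ)^b * (n:ℝ)^(-s.re) = (n:ℝ)^(a + b - s.re) := by
      rw [← Real.rpow_add hnpos, ← Real.rpow_add hnpos]; ring_nf
    have hr2 : (n:ℝ) * (n:ℝ)^(a + b - s.re) = (n:ℝ)^(a + b + 1 - s.re) := by
      nth_rewrite 1 [← Real.rpow_one (n:ℝ)]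
      rw [← Real.rpow_add hnpos]; ring_nf
    rw [hr1]
    calc ((n.divisors.card : ℝ))^2 * (n:ℝ)^(a+b-s.re)
        ≤ (16 * (n:ℝ)) * (n:ℝ)^(a+b-s.re) := by
          exact mul_le_mul_of_nonneg_right hd2 (by positivity)
      _ = 16 * ((n:ℝ) * (n:ℝ)^(a+b-s.re)) := by ring
      _ = 16 * (n:ℝ)^(a+b+1-s.re) := by rw [hr2]
  have euler := EulerProduct.eulerProduct_hasProd hf1 (fun {m n} h => hfmul h) hnorm hf0
  have hloc : (fun p : Nat.Primes => ∑' e : ℕ, f ((p : ℕ) ^ e)) =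
      (fun p : Nat.Primes =>
        (1 - α p.1 * α' p.1 * β p.1 * β' p.1 * (p.1 : ℂ) ^ (-(2 * s))) *
          ((1 - α p.1 * β p.1 * (p.1 : ℂ) ^ (-s)) * (1 - α p.1 * β' p.1 * (p.1 : ℂ) ^ (-s)) *
           (1 - α' p.1 * β p.1 * (p.1 : ℂ) ^ (-s)) * (1 - α' p.1 * β' p.1 * (p.1 : ℂ) ^ (-s)))⁻¹) := by
    funext P
    obtain ⟨p, hp⟩ := P
    simp only
    set x : ℂ := (p : ℂ) ^ (-s) with hx
    have hp1 : 1 < p := hp.one_lt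
    have hppos : (0:ℝ) < (p:ℝ) := by exact_mod_cast Nat.lt_of_lt_of_le Nat.zero_lt_one hp1.le
    have hpC0 : (p : ℂ) ≠ 0 := Nat.cast_ne_zero.mpr (by omega)
    have hfe : ∀ e : ℕ, f (p ^ e) = cfn (α p) (α' p) (β p) (β' p) x e := by
      intro e
      have hpe : p ^ e ≠ 0 := pow_ne_zero e (by omega)
      simp only [hfdef, if_neg hpe, cfn, hseq]
      rw [hAp p hp e, hBp p hp e]
      congr 1
      rw [Nat.cast_pow, ← Complex.natCast_cpow_natCast_mul, Complex.cpow_nat_mul]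
    have hsum_loc : Summable (cfn (α p) (α' p) (β p) (β' p) x) := by
      have h1 : Summable (fun e : ℕ => ‖f (p ^ e)‖) :=
        hnorm.comp_injective (Nat.pow_right_injective hp1)
      exact (h1.of_norm).congr hfe
    have key := local_id (α p) (α' p) (β p) (β' p) x hsum_loc
    have hxnorm : ‖x‖ = (p:ℝ) ^ (-s.re) := by
      rw [hx, Complex.norm_natCast_cpow_of_pos (by omega), Complex.neg_re]
    have hfac : ∀ u v : ℂ, ‖u‖ ≤ (p:ℝ)^a → ‖v‖ ≤ (p:ℝ)^b → 1 - u * v * x ≠ 0 := by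
      intro u v hu hv
      have hlt : ‖u * v * x‖ < 1 := by
        rw [norm_mul, norm_mul, hxnorm]
        calc ‖u‖ * ‖v‖ * (p:ℝ)^(-s.re) ≤ (p:ℝ)^a * (p:ℝ)^b * (p:ℝ)^(-s.re) := by
              refine mul_le_mul_of_nonneg_right ?_ (by positivity)
              exact mul_le_mul hu hv (norm_nonneg _) (by positivity)
          _ = (p:ℝ)^(a + b + -s.re) := by
              rw [← Real.rpow_add hppos, ← Real.rpow_add hppos]
          _ < 1 := Real.rpow_lt_one_of_one_lt_of_neg (by exact_mod_cast hp1) (by linarith)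
      intro h
      have h1 : u * v * x = 1 := by linear_combination -h
      rw [h1] at hlt
      simp at hlt
    have hD : Dfn (α p) (α' p) (β p) (β' p) x ≠ 0 := by
      simp only [Dfn]
      exact mul_ne_zero (mul_ne_zero (mul_ne_zero
        (hfac _ _ (hα p hp).1 (hβ p hp).1) (hfac _ _ (hα p hp).1 (hβ p hp).2))
        (hfac _ _ (hα p hp).2 (hβ p hp).1)) (hfac _ _ (hα p hp).2 (hβ p hp).2)
    have hx2 : (1 : ℂ) - α p * α' p * β p * β' p * (p : ℂ) ^ (-(2 * s))
        = 1 - α p * α' p * β p * β' p * x^2 := by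
      rw [hx, show -(2 * s) = -s + -s by ring, Complex.cpow_add _ _ hpC0]
      ring
    rw [tsum_congr hfe, hx2]
    rw [show ((1 - α p * β p * (p:ℂ)^(-s)) * (1 - α p * β' p * (p:ℂ)^(-s)) *
           (1 - α' p * β p * (p:ℂ)^(-s)) * (1 - α' p * β' p * (p:ℂ)^(-s)))
        = Dfn (α p) (α' p) (β p) (β' p) x from rfl]
    rw [eq_mul_inv_iff_mul_eq₀ hD]
    linear_combination key
  rw [hloc] at euler
  have hsummf : Summable f := hnorm.of_norm
  have hterm : ∀ n : ℕ, A (n + 1) * B (n + 1) * ((n + 1 : ℕ) : ℂ) ^ (-s) = f (n + 1) := by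
    intro n
    simp only [hfdef, if_neg (Nat.succ_ne_zero n)]
  refine ⟨?_, euler.multipliable, ?_⟩
  · have h1 : Summable (fun n : ℕ => ‖f (n + 1)‖) :=
      hnorm.comp_injective Nat.succ_injective
    exact h1.congr fun n => by rw [hterm n]
  · have hshift : (∑' n : ℕ, A (n + 1) * B (n + 1) * ((n + 1 : ℕ) : ℂ) ^ (-s)) = ∑' n, f n := by
      rw [Summable.tsum_eq_zero_add hsummf, hf0, zero_add]
      exact tsum_congr hterm
    rw [hshift, ← euler.tprod_eq]
end

section
/- For y > 0 and complex numbers α, β with Re(β) > 0 and Re(α) < 1, one has Γ(1-α) · ∫₀^∞ (u+1)^{α-1} u^{β-1} e^{-yu} du = y^{1-α-β} · Γ(β) · ∫₀^∞ (u+1)^{-β} u^{-α} e^{-yu} du, both integrals being absolutely convergent. (This is the functional equation W(y, α, β) = y^{1-α-β} W(y, 1-β, 1-α) of the Whittaker-type function W(y, α, β) = Γ(β)^{-1} ∫₀^∞ (u+1)^{α-1} u^{β-1} e^{-yu} du, valid on the region where both integrals converge.) -/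
open MeasureTheory Set

lemma norm_aux (w : ℂ) {x : ℝ} (hx : 0 < x) : ‖(x:ℂ) ^ w‖ = x ^ w.re := by
  rw [Complex.norm_cpow_eq_rpow_re_of_pos hx]

lemma real_int {s : ℝ} (hs : -1 < s) {r : ℝ} (hr : 0 < r) :
    IntegrableOn (fun t : ℝ => t ^ s * Real.exp (-(r * t))) (Set.Ioi 0) := by
  have := integrableOn_rpow_mul_exp_neg_mul_rpow (p := 1) (s := s) (b := r) hs one_pos hr
  simpa [Real.rpow_one, neg_mul] using this

lemma cpow_int {s : ℂ} (hs : 0 < s.re) {r : ℝ} (hr : 0 < r) :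
    IntegrableOn (fun t : ℝ => (t:ℂ) ^ (s - 1) * Complex.exp (-((r:ℂ) * t))) (Set.Ioi 0) := by
  have hmeas : Measurable (fun t : ℝ => (t:ℂ) ^ (s - 1) * Complex.exp (-((r:ℂ) * t))) := by
    fun_prop
  refine ((real_int (by linarith : (-1:ℝ) < s.re - 1) hr).integrable.mono'
    hmeas.aestronglyMeasurable ?_)
  filter_upwards [ae_restrict_mem measurableSet_Ioi] with t ht
  rw [mem_Ioi] at ht
  rw [norm_mul, norm_aux _ ht, Complex.norm_exp]
  simp [Complex.sub_re, ht.le]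

lemma gamma_formula {s : ℂ} (hs : 0 < s.re) {r : ℝ} (hr : 0 < r) :
    ∫ t in Ioi (0:ℝ), (t:ℂ) ^ (s - 1) * Complex.exp (-((r:ℂ) * t)) =
      (r:ℂ) ^ (-s) * Complex.Gamma s := by
  rw [Complex.integral_cpow_mul_exp_neg_mul_Ioi hs hr]
  congr 1
  have harg : ((r:ℂ)).arg ≠ Real.pi := by
    rw [Complex.arg_ofReal_of_nonneg hr.le]
    exact fun h => Real.pi_ne_zero h.symm
  rw [one_div, Complex.inv_cpow _ _ harg, ← Complex.cpow_neg]

lemma aux_int {y : ℝ} (hy : 0 < y) {A B : ℂ} (hA : A.re ≤ 0) (hB : -1 < B.re) :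
    IntegrableOn (fun u : ℝ => ((u:ℂ) + 1) ^ A * (u:ℂ) ^ B * Complex.exp (-((y:ℂ) * u)))
      (Set.Ioi 0) := by
  have hmeas : Measurable (fun u : ℝ =>
      ((u:ℂ) + 1) ^ A * (u:ℂ) ^ B * Complex.exp (-((y:ℂ) * u))) := by fun_prop
  refine ((real_int hB hy).integrable.mono' hmeas.aestronglyMeasurable ?_)
  filter_upwards [ae_restrict_mem measurableSet_Ioi] with u hu
  rw [mem_Ioi] at hu
  have h1 : ((u:ℂ) + 1) = ((u + 1 : ℝ) : ℂ) := by push_cast; ring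
  rw [norm_mul, norm_mul, h1, norm_aux _ (by linarith), norm_aux _ hu,
    Complex.norm_exp]
  have hb : (u + 1 : ℝ) ^ A.re ≤ 1 :=
    Real.rpow_le_one_of_one_le_of_nonpos (by linarith) hA
  have h2 : (-((y:ℂ) * u)).re = -(y * u) := by simp
  rw [h2]
  calc (u + 1 : ℝ) ^ A.re * u ^ B.re * Real.exp (-(y * u))
      ≤ 1 * (u ^ B.re * Real.exp (-(y * u))) := by
        rw [mul_assoc]
        exact mul_le_mul_of_nonneg_right hb (by positivity)
    _ = u ^ B.re * Real.exp (-(y * u)) := one_mul _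

theorem stmt_8 (y : ℝ) (hy : 0 < y) (α β : ℂ) (hβ : 0 < β.re) (hα : α.re < 1) :
    IntegrableOn (fun u : ℝ =>
      ((u : ℂ) + 1) ^ (α - 1) * (u : ℂ) ^ (β - 1) * Complex.exp (-(y : ℂ) * u)) (Set.Ioi 0) ∧
    IntegrableOn (fun u : ℝ =>
      ((u : ℂ) + 1) ^ (-β) * (u : ℂ) ^ (-α) * Complex.exp (-(y : ℂ) * u)) (Set.Ioi 0) ∧
    Complex.Gamma (1 - α) *
        ∫ u in Set.Ioi (0 : ℝ),
          ((u : ℂ) + 1) ^ (α - 1) * (u : ℂ) ^ (β - 1) * Complex.exp (-(y : ℂ) * u) =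
      (y : ℂ) ^ (1 - α - β) * Complex.Gamma β *
        ∫ u in Set.Ioi (0 : ℝ),
          ((u : ℂ) + 1) ^ (-β) * (u : ℂ) ^ (-α) * Complex.exp (-(y : ℂ) * u) := by
  simp only [neg_mul]
  have h1 : IntegrableOn (fun u : ℝ =>
      ((u : ℂ) + 1) ^ (α - 1) * (u : ℂ) ^ (β - 1) * Complex.exp (-((y : ℂ) * u)))
      (Set.Ioi 0) :=
    aux_int hy (by simp only [Complex.sub_re, Complex.one_re]; linarith)
      (by simp only [Complex.sub_re, Complex.one_re]; linarith)
  have h2 : IntegrableOn (fun u : ℝ =>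
      ((u : ℂ) + 1) ^ (-β) * (u : ℂ) ^ (-α) * Complex.exp (-((y : ℂ) * u)))
      (Set.Ioi 0) :=
    aux_int hy (by simp only [Complex.neg_re]; linarith)
      (by simp only [Complex.neg_re]; linarith)
  refine ⟨h1, h2, ?_⟩
  have hy0 : (y:ℂ) ≠ 0 := Complex.ofReal_ne_zero.mpr hy.ne'
  set F : ℝ → ℝ → ℂ := fun u t =>
    ((t:ℂ) ^ (-α) * Complex.exp (-(((u + 1 : ℝ):ℂ) * t))) *
      ((u:ℂ) ^ (β - 1) * Complex.exp (-((y:ℂ) * u))) with hFdef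
  have h1α : 0 < (1 - α).re := by simp only [Complex.sub_re, Complex.one_re]; linarith
  -- Step A : pointwise representation
  have key1 : ∀ u ∈ Ioi (0:ℝ), Complex.Gamma (1 - α) *
      (((u : ℂ) + 1) ^ (α - 1) * (u : ℂ) ^ (β - 1) * Complex.exp (-((y : ℂ) * u))) =
      ∫ t in Ioi (0:ℝ), F u t := by
    intro u hu
    rw [mem_Ioi] at hu
    rw [hFdef]
    rw [MeasureTheory.integral_mul_const]
    have h := gamma_formula h1α (r := u + 1) (by linarith)
    rw [show (1:ℂ) - α - 1 = -α by ring] at h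
    rw [h, show -((1:ℂ) - α) = α - 1 by ring,
      show (((u + 1 : ℝ)):ℂ) = (u:ℂ) + 1 by push_cast; ring]
    ring
  -- Fubini integrability
  have hF : Integrable (Function.uncurry F)
      ((volume.restrict (Ioi 0)).prod (volume.restrict (Ioi 0))) := by
    have hg := (real_int (by linarith : (-1:ℝ) < β.re - 1) hy).integrable
    have hh := (real_int (by linarith : (-1:ℝ) < -α.re) one_pos).integrable
    have hprod := hg.mul_prod hh
    have hmeas : Measurable (Function.uncurry F) := by
      rw [hFdef]; unfold Function.uncurry; fun_prop
    refine Integrable.mono' hprod hmeas.aestronglyMeasurable ?_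
    rw [Measure.prod_restrict]
    filter_upwards [ae_restrict_mem (measurableSet_Ioi.prod measurableSet_Ioi)] with p hp
    obtain ⟨hu, ht⟩ := hp
    rw [mem_Ioi] at hu ht
    rw [hFdef]
    unfold Function.uncurry
    simp only
    rw [norm_mul, norm_mul, norm_mul, norm_aux _ ht, norm_aux _ hu,
      Complex.norm_exp, Complex.norm_exp]
    have e1 : (-(((p.1 + 1 : ℝ):ℂ) * (p.2:ℂ))).re = -((p.1 + 1) * p.2) := by simp
    have e2 : (-((y:ℂ) * (p.1:ℂ))).re = -(y * p.1) := by simp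
    rw [e1, e2]
    have hexp : Real.exp (-((p.1 + 1) * p.2)) ≤ Real.exp (-(1 * p.2)) := by
      apply Real.exp_le_exp.mpr
      nlinarith
    calc p.2 ^ (-α).re * Real.exp (-((p.1 + 1) * p.2)) *
          (p.1 ^ (β - 1).re * Real.exp (-(y * p.1)))
        ≤ p.2 ^ (-α).re * Real.exp (-(1 * p.2)) *
          (p.1 ^ (β - 1).re * Real.exp (-(y * p.1))) := by
          apply mul_le_mul_of_nonneg_right _ (by positivity)
          exact mul_le_mul_of_nonneg_left hexp (by positivity)
      _ = p.1 ^ (β.re - 1) * Real.exp (-(y * p.1)) *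
          (p.2 ^ (-α.re) * Real.exp (-(1 * p.2))) := by
          simp only [Complex.neg_re, Complex.sub_re, Complex.one_re]; ring
  -- inner integral computation at fixed t
  have key2 : ∀ t ∈ Ioi (0:ℝ), (∫ u in Ioi (0:ℝ), F u t) =
      Complex.Gamma β * ((t:ℂ) ^ (-α) * (((y + t : ℝ):ℂ)) ^ (-β) *
        Complex.exp (-(((1:ℝ):ℂ) * t))) := by
    intro t ht
    rw [mem_Ioi] at ht
    have hrw : ∀ u : ℝ, F u t =
        ((t:ℂ) ^ (-α) * Complex.exp (-(((1:ℝ):ℂ) * t))) *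
          ((u:ℂ) ^ (β - 1) * Complex.exp (-(((y + t : ℝ):ℂ) * u))) := by
      intro u
      rw [hFdef]
      have e : Complex.exp (-(((u + 1 : ℝ):ℂ) * t)) * Complex.exp (-((y:ℂ) * u)) =
          Complex.exp (-(((1:ℝ):ℂ) * t)) * Complex.exp (-(((y + t : ℝ):ℂ) * u)) := by
        rw [← Complex.exp_add, ← Complex.exp_add]
        congr 1
        push_cast
        ring
      calc ((t:ℂ) ^ (-α) * Complex.exp (-(((u + 1 : ℝ):ℂ) * t))) *
            ((u:ℂ) ^ (β - 1) * Complex.exp (-((y:ℂ) * u)))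
          = (t:ℂ) ^ (-α) * (u:ℂ) ^ (β - 1) *
            (Complex.exp (-(((u + 1 : ℝ):ℂ) * t)) * Complex.exp (-((y:ℂ) * u))) := by ring
        _ = (t:ℂ) ^ (-α) * (u:ℂ) ^ (β - 1) *
            (Complex.exp (-(((1:ℝ):ℂ) * t)) * Complex.exp (-(((y + t : ℝ):ℂ) * u))) := by
            rw [e]
        _ = _ := by ring
    simp_rw [hrw]
    rw [MeasureTheory.integral_const_mul]
    have h := gamma_formula hβ (r := y + t) (by linarith)
    rw [show β - 1 = β - 1 from rfl] at h
    rw [h]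
    ring
  -- main computation
  calc Complex.Gamma (1 - α) *
      ∫ u in Ioi (0:ℝ), ((u : ℂ) + 1) ^ (α - 1) * (u : ℂ) ^ (β - 1) *
        Complex.exp (-((y : ℂ) * u))
      = ∫ u in Ioi (0:ℝ), Complex.Gamma (1 - α) *
          (((u : ℂ) + 1) ^ (α - 1) * (u : ℂ) ^ (β - 1) * Complex.exp (-((y : ℂ) * u))) := by
        rw [MeasureTheory.integral_const_mul]
    _ = ∫ u in Ioi (0:ℝ), ∫ t in Ioi (0:ℝ), F u t :=
        setIntegral_congr_fun measurableSet_Ioi key1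
    _ = ∫ t in Ioi (0:ℝ), ∫ u in Ioi (0:ℝ), F u t := integral_integral_swap hF
    _ = ∫ t in Ioi (0:ℝ), Complex.Gamma β * ((t:ℂ) ^ (-α) * (((y + t : ℝ):ℂ)) ^ (-β) *
          Complex.exp (-(((1:ℝ):ℂ) * t))) :=
        setIntegral_congr_fun measurableSet_Ioi key2
    _ = (y : ℂ) ^ (1 - α - β) * Complex.Gamma β *
        ∫ u in Ioi (0:ℝ), ((u : ℂ) + 1) ^ (-β) * (u : ℂ) ^ (-α) *
          Complex.exp (-((y : ℂ) * u)) := by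
        set g : ℝ → ℂ := fun t => Complex.Gamma β * ((t:ℂ) ^ (-α) * (((y + t : ℝ):ℂ)) ^ (-β) *
          Complex.exp (-(((1:ℝ):ℂ) * t))) with hgdef
        have hsub := MeasureTheory.integral_comp_mul_left_Ioi g 0 hy
        rw [mul_zero] at hsub
        have hint : (∫ t in Ioi (0:ℝ), g t) = y • ∫ s in Ioi (0:ℝ), g (y * s) := by
          rw [hsub, smul_smul, mul_inv_cancel₀ hy.ne', one_smul]
        rw [hint]
        have hgys : ∀ s ∈ Ioi (0:ℝ), g (y * s) =
            ((y:ℂ) ^ (-α) * (y:ℂ) ^ (-β) * Complex.Gamma β) *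
              (((s : ℂ) + 1) ^ (-β) * (s : ℂ) ^ (-α) * Complex.exp (-((y : ℂ) * s))) := by
          intro s hs
          rw [mem_Ioi] at hs
          rw [hgdef]
          simp only
          have c1 : ((y * s : ℝ):ℂ) ^ (-α) = (y:ℂ) ^ (-α) * (s:ℂ) ^ (-α) := by
            push_cast
            exact Complex.mul_cpow_ofReal_nonneg hy.le hs.le (-α)
          have c2 : ((y + y * s : ℝ):ℂ) ^ (-β) = (y:ℂ) ^ (-β) * ((s:ℂ) + 1) ^ (-β) := by
            rw [show (y + y * s : ℝ) = y * (1 + s) by ring, Complex.ofReal_mul,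
              Complex.mul_cpow_ofReal_nonneg hy.le (by linarith) (-β),
              show ((1 + s : ℝ):ℂ) = (s:ℂ) + 1 by push_cast; ring]
          have c3 : Complex.exp (-(((1:ℝ):ℂ) * ((y * s : ℝ):ℂ))) =
              Complex.exp (-((y:ℂ) * s)) := by
            congr 1
            push_cast
            ring
          rw [c1, c2, c3]
          ring
        rw [setIntegral_congr_fun measurableSet_Ioi hgys, MeasureTheory.integral_const_mul,
          Complex.real_smul]
        rw [show (1:ℂ) - α - β = 1 + -α + -β by ring, Complex.cpow_add _ _ hy0,
          Complex.cpow_add _ _ hy0, Complex.cpow_one]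
        ring
end
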